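/- Let G be a topological group, u : G → ℂ a continuous function, H a Hilbert space, and ξ, η : G → H bounded functions with u(st⁻¹) = ⟨ξ(s), η(t)⟩ for all s,t ∈ G. Then there exist bounded weakly continuous functions ξ̃, η̃ : G → H with sup_s ‖ξ̃(s)‖ ≤ sup_s ‖ξ(s)‖, sup_t ‖η̃(t)‖ ≤ sup_t ‖η(t)‖, and u(st⁻¹) = ⟨ξ̃(s), η̃(t)⟩ for all s,t ∈ G. -/

import Mathlib

universe u v

local notation "⟪" x ", " y "⟫" => @inner ℂ _ _ x y


lemma weak_cont_of_dense {G : Type u} [TopologicalSpace G]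
    {H : Type v} [NormedAddCommGroup H] [InnerProductSpace ℂ H] [CompleteSpace H]
    (f : G → H) (C : ℝ) (hC : ∀ s, ‖f s‖ ≤ C) (D : Set H)
    (hmem : ∀ s, f s ∈ (Submodule.span ℂ D).topologicalClosure)
    (hcont : ∀ ζ ∈ D, Continuous fun s => (⟪f s, ζ⟫ : ℂ)) :
    ∀ ζ : H, Continuous fun s => (⟪f s, ζ⟫ : ℂ) := by
  set K : Submodule ℂ H := (Submodule.span ℂ D).topologicalClosure with hK
  haveI : CompleteSpace K := (Submodule.span ℂ D).isClosed_topologicalClosure.completeSpace_coe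
  -- step 1: continuity for ζ in the span
  have hspan : ∀ ζ ∈ Submodule.span ℂ D, Continuous fun s => (⟪f s, ζ⟫ : ℂ) := by
    intro ζ hζ
    induction hζ using Submodule.span_induction with
    | mem x hx => exact hcont x hx
    | zero => simpa using continuous_const
    | add x y _ _ hx hy =>
        simp only [inner_add_right]; exact hx.add hy
    | smul c x _ hx =>
        simp only [inner_smul_right]; exact continuous_const.mul hx
  -- step 2: continuity for ζ in the closure of the span
  have hclos : ∀ ζ ∈ K, Continuous fun s => (⟪f s, ζ⟫ : ℂ) := by
    intro ζ hζ
    have hζ' : ζ ∈ closure ((Submodule.span ℂ D : Submodule ℂ H) : Set H) := hζ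
    rcases mem_closure_iff_seq_limit.mp hζ' with ⟨w, hw, hwlim⟩
    have : TendstoUniformly (fun n s => (⟪f s, w n⟫ : ℂ)) (fun s => ⟪f s, ζ⟫) Filter.atTop := by
      rw [Metric.tendstoUniformly_iff]
      intro ε hε
      have hεC : ∀ᶠ n in Filter.atTop, ‖w n - ζ‖ < ε / (max C 1 + 1) := by
        have := (hwlim.sub_const ζ)
        have h := Metric.tendsto_atTop.mp (tendsto_iff_norm_sub_tendsto_zero.mp hwlim) (ε / (max C 1 + 1)) (by positivity)
        rcases h with ⟨N, hN⟩
        exact Filter.eventually_atTop.mpr ⟨N, fun n hn => by simpa [Real.dist_eq] using hN n hn⟩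
      filter_upwards [hεC] with n hn s
      have h1 : dist (⟪f s, ζ⟫ : ℂ) (⟪f s, w n⟫ : ℂ) = ‖(⟪f s, w n - ζ⟫ : ℂ)‖ := by
        rw [dist_eq_norm, ← inner_sub_right, ← norm_neg, ← inner_neg_right]
        congr 1; abel_nf
      have h2 : ‖(⟪f s, w n - ζ⟫ : ℂ)‖ ≤ ‖f s‖ * ‖w n - ζ‖ := norm_inner_le_norm _ _
      have h3 : ‖f s‖ * ‖w n - ζ‖ ≤ (max C 1) * ‖w n - ζ‖ := by
        apply mul_le_mul_of_nonneg_right ((hC s).trans (le_max_left _ _)) (norm_nonneg _)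
      have h4 : (max C 1) * ‖w n - ζ‖ < (max C 1 + 1) * (ε / (max C 1 + 1)) := by
        have hM : (0:ℝ) < max C 1 + 1 := by positivity
        calc (max C 1) * ‖w n - ζ‖ ≤ (max C 1) * (ε / (max C 1 + 1)) := by
              apply mul_le_mul_of_nonneg_left hn.le (le_trans zero_le_one (le_max_right _ _))
          _ < (max C 1 + 1) * (ε / (max C 1 + 1)) := by
              apply mul_lt_mul_of_pos_right (by linarith) (by positivity)
      have h5 : (max C 1 + 1) * (ε / (max C 1 + 1)) = ε := by
        field_simp
      rw [h1]
      calc ‖(⟪f s, w n - ζ⟫ : ℂ)‖ ≤ (max C 1) * ‖w n - ζ‖ := h2.trans h3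
        _ < ε := by rw [← h5]; exact h4
    exact this.continuous (Filter.eventually_atTop.mpr ⟨0, fun n _ => hspan (w n) (hw n)⟩).frequently
  -- step 3: general ζ, via the projection
  intro ζ
  have key : ∀ s, (⟪f s, ζ⟫ : ℂ) = ⟪f s, (Submodule.orthogonalProjection K ζ : H)⟫ := by
    intro s
    have horth : ζ - (Submodule.orthogonalProjection K ζ : H) ∈ Kᗮ :=
      Submodule.sub_starProjection_mem_orthogonal ζ
    have h0 : (⟪f s, ζ - (Submodule.orthogonalProjection K ζ : H)⟫ : ℂ) = 0 := by
      have := (Submodule.mem_orthogonal K _).mp horth (f s) (hmem s)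
      exact this
    rw [inner_sub_right] at h0
    exact (sub_eq_zero.mp h0)
  simp only [key]
  exact hclos _ (Submodule.orthogonalProjection K ζ).2

/-- Let `G` be a topological group, `u : G → ℂ` continuous, `H` a
Hilbert space, and `ξ, η : G → H` bounded functions with `u (s t⁻¹) = ⟨ξ s, η t⟩` for all
`s, t`.  Then there are bounded *weakly continuous* `ξ', η' : G → H`, with suprema of
norms dominated by those of `ξ` and `η`, realizing the same identity. -/
theorem weakly_continuous_factorization_of_factorization {G : Type u} [Group G]
    [TopologicalSpace G] [IsTopologicalGroup G]
    {H : Type v} [NormedAddCommGroup H] [InnerProductSpace ℂ H] [CompleteSpace H]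
    (u : G → ℂ) (hu : Continuous u) (ξ η : G → H) (A B : ℝ)
    (hξ : ∀ s : G, ‖ξ s‖ ≤ A) (hη : ∀ t : G, ‖η t‖ ≤ B)
    (huv : ∀ s t : G, u (s * t⁻¹) = ⟪η t, ξ s⟫) :
    ∃ ξ' η' : G → H,
      (∀ ζ : H, Continuous fun s : G => (⟪ξ' s, ζ⟫ : ℂ)) ∧
      (∀ ζ : H, Continuous fun t : G => (⟪η' t, ζ⟫ : ℂ)) ∧
      (∀ s : G, ‖ξ' s‖ ≤ ⨆ s' : G, ‖ξ s'‖) ∧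
      (∀ t : G, ‖η' t‖ ≤ ⨆ t' : G, ‖η t'‖) ∧
      ∀ s t : G, u (s * t⁻¹) = ⟪η' t, ξ' s⟫ := by
  set K₁ : Submodule ℂ H := (Submodule.span ℂ (Set.range ξ)).topologicalClosure with hK₁
  haveI : CompleteSpace K₁ :=
    (Submodule.span ℂ (Set.range ξ)).isClosed_topologicalClosure.completeSpace_coe
  set η' : G → H := fun t => (Submodule.orthogonalProjection K₁ (η t) : H) with hη'def
  have hξmem : ∀ s, ξ s ∈ K₁ := fun s =>
    Submodule.le_topologicalClosure _ (Submodule.subset_span ⟨s, rfl⟩)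
  have he : ∀ s t : G, (⟪η' t, ξ s⟫ : ℂ) = ⟪η t, ξ s⟫ := by
    intro s t
    have h0 := Submodule.starProjection_inner_eq_zero (K := K₁) (η t) (ξ s) (hξmem s)
    rw [inner_sub_left] at h0
    exact (sub_eq_zero.mp h0).symm
  set K₂ : Submodule ℂ H := (Submodule.span ℂ (Set.range η')).topologicalClosure with hK₂
  haveI : CompleteSpace K₂ :=
    (Submodule.span ℂ (Set.range η')).isClosed_topologicalClosure.completeSpace_coe
  set ξ' : G → H := fun s => (Submodule.orthogonalProjection K₂ (ξ s) : H) with hξ'def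
  have hη'mem : ∀ t, η' t ∈ K₂ := fun t =>
    Submodule.le_topologicalClosure _ (Submodule.subset_span ⟨t, rfl⟩)
  have hf : ∀ s t : G, (⟪η' t, ξ' s⟫ : ℂ) = ⟪η' t, ξ s⟫ := by
    intro s t
    have horth : ξ s - (Submodule.orthogonalProjection K₂ (ξ s) : H) ∈ K₂ᗮ :=
      Submodule.sub_starProjection_mem_orthogonal (ξ s)
    have h0 : (⟪η' t, ξ s - (Submodule.orthogonalProjection K₂ (ξ s) : H)⟫ : ℂ) = 0 :=
      (Submodule.mem_orthogonal K₂ _).mp horth (η' t) (hη'mem t)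
    rw [inner_sub_right] at h0
    exact (sub_eq_zero.mp h0).symm
  -- norm bounds
  have hnormP : ∀ (K : Submodule ℂ H) [Submodule.HasOrthogonalProjection K] (x : H),
      ‖(Submodule.orthogonalProjection K x : H)‖ ≤ ‖x‖ := by
    intro K _ x
    calc ‖(Submodule.orthogonalProjection K x : H)‖ = ‖Submodule.orthogonalProjection K x‖ := rfl
      _ ≤ ‖Submodule.orthogonalProjection K‖ * ‖x‖ := (Submodule.orthogonalProjection K).le_opNorm x
      _ ≤ 1 * ‖x‖ := mul_le_mul_of_nonneg_right (Submodule.orthogonalProjectionOnto_norm_le K) (norm_nonneg _)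
      _ = ‖x‖ := one_mul _
  have hη'norm : ∀ t, ‖η' t‖ ≤ ‖η t‖ := fun t => hnormP K₁ (η t)
  have hξ'norm : ∀ s, ‖ξ' s‖ ≤ ‖ξ s‖ := fun s => hnormP K₂ (ξ s)
  have hη'B : ∀ t, ‖η' t‖ ≤ B := fun t => (hη'norm t).trans (hη t)
  have hξ'A : ∀ s, ‖ξ' s‖ ≤ A := fun s => (hξ'norm s).trans (hξ s)
  -- the identity
  have hid : ∀ s t : G, u (s * t⁻¹) = ⟪η' t, ξ' s⟫ := by
    intro s t; rw [hf, he]; exact huv s t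
  refine ⟨ξ', η', ?_, ?_, ?_, ?_, hid⟩
  · -- weak continuity of ξ'
    apply weak_cont_of_dense ξ' A hξ'A (Set.range η')
      (fun s => (Submodule.orthogonalProjection K₂ (ξ s)).2)
    rintro _ ⟨t, rfl⟩
    have : (fun s => (⟪ξ' s, η' t⟫ : ℂ)) = fun s => star (u (s * t⁻¹)) := by
      funext s
      rw [hid s t, ← inner_conj_symm]
      rfl
    rw [this]
    exact continuous_star.comp (hu.comp ((continuous_id.mul continuous_const)))
  · -- weak continuity of η'
    apply weak_cont_of_dense η' B hη'B (Set.range ξ)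
      (fun t => (Submodule.orthogonalProjection K₁ (η t)).2)
    rintro _ ⟨s, rfl⟩
    have : (fun t => (⟪η' t, ξ s⟫ : ℂ)) = fun t => u (s * t⁻¹) := by
      funext t; rw [he]; exact (huv s t).symm
    rw [this]
    exact hu.comp (continuous_const.mul continuous_inv)
  · intro s
    have hbdd : BddAbove (Set.range fun s' : G => ‖ξ s'‖) := ⟨A, by rintro _ ⟨s', rfl⟩; exact hξ s'⟩
    exact (hξ'norm s).trans (le_ciSup hbdd s)
  · intro t
    have hbdd : BddAbove (Set.range fun t' : G => ‖η t'‖) := ⟨B, by rintro _ ⟨t', rfl⟩; exact hη t'⟩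
    exact (hη'norm t).trans (le_ciSup hbdd t)
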